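/- Let u, ρ : ℝ × ℝ → ℝ be sufficiently smooth and positive functions of (t,s) satisfying the system u_t = ρ²(u_ss − 2u_s²/u) + ρ ρ_s u_s and ρ_t = 2ρ³(u_ss/u − u_s²/u²) + 2ρ² ρ_s (u_s/u) at every point. Then at every point the two conservation-law identities hold: ∂t(1/ρ) = ∂s(−2ρ u_s/u) and ∂t(u/ρ) = ∂s(−ρ u_s). -/

import Mathlib

noncomputable section

/-- Partial derivative with respect to the first variable (time). -/
def pdT (f : ℝ × ℝ → ℝ) (t s : ℝ) : ℝ := deriv (fun r => f (r, s)) t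

/-- Partial derivative with respect to the second variable (mass coordinate). -/
def pdS (f : ℝ × ℝ → ℝ) (t s : ℝ) : ℝ := deriv (fun w => f (t, w)) s

/-- the Lagrange-coordinate system for the linear heat equation
has the two conservation-law forms `(1/ρ)_t = (−2ρ u_s/u)_s` and
`(u/ρ)_t = (−ρ u_s)_s`. -/
theorem lagrange_system_conservation_laws
    (u ρ : ℝ × ℝ → ℝ)
    (hupos : ∀ p, 0 < u p) (hρpos : ∀ p, 0 < ρ p)
    (hu : ContDiff ℝ 2 u) (hρ : ContDiff ℝ 2 ρ)
    (hequ : ∀ t s : ℝ,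
      pdT u t s = ρ (t, s) ^ 2 *
          (pdS (fun p => pdS u p.1 p.2) t s - 2 * (pdS u t s) ^ 2 / u (t, s)) +
        ρ (t, s) * pdS ρ t s * pdS u t s)
    (heqρ : ∀ t s : ℝ,
      pdT ρ t s = 2 * ρ (t, s) ^ 3 *
          (pdS (fun p => pdS u p.1 p.2) t s / u (t, s) -
            (pdS u t s) ^ 2 / u (t, s) ^ 2) +
        2 * ρ (t, s) ^ 2 * pdS ρ t s * (pdS u t s / u (t, s))) :
    ∀ t s : ℝ,
      deriv (fun r => 1 / ρ (r, s)) t =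
        deriv (fun w => -2 * ρ (t, w) * pdS u t w / u (t, w)) s ∧
      deriv (fun r => u (r, s) / ρ (r, s)) t =
        deriv (fun w => -(ρ (t, w) * pdS u t w)) s := by
  intro t s
  have hune : u (t, s) ≠ 0 := (hupos _).ne'
  have hρne : ρ (t, s) ≠ 0 := (hρpos _).ne'
  have hgC : ContDiff ℝ 2 (fun w => u (t, w)) := hu.comp (contDiff_const.prodMk contDiff_id)
  have hrC : ContDiff ℝ 2 (fun w => ρ (t, w)) := hρ.comp (contDiff_const.prodMk contDiff_id)
  have haC : ContDiff ℝ 2 (fun x => u (x, s)) := hu.comp (contDiff_id.prodMk contDiff_const)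
  have hbC : ContDiff ℝ 2 (fun x => ρ (x, s)) := hρ.comp (contDiff_id.prodMk contDiff_const)
  have hgd : Differentiable ℝ (fun w => u (t, w)) := hgC.differentiable (by norm_num)
  have hrd : Differentiable ℝ (fun w => ρ (t, w)) := hrC.differentiable (by norm_num)
  have had : Differentiable ℝ (fun x => u (x, s)) := haC.differentiable (by norm_num)
  have hbd : Differentiable ℝ (fun x => ρ (x, s)) := hbC.differentiable (by norm_num)
  have hg'd : Differentiable ℝ (deriv (fun w => u (t, w))) := by
    have h2 : ContDiff ℝ ((1:ℕ)+1) (fun w => u (t, w)) := by exact_mod_cast hgC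
    exact (contDiff_succ_iff_deriv.mp h2).2.2.differentiable (by simp)
  have hgs : HasDerivAt (fun w => u (t, w)) (pdS u t s) s := (hgd s).hasDerivAt
  have hrs : HasDerivAt (fun w => ρ (t, w)) (pdS ρ t s) s := (hrd s).hasDerivAt
  have hg2 : HasDerivAt (deriv (fun w => u (t, w)))
      (pdS (fun p => pdS u p.1 p.2) t s) s := (hg'd s).hasDerivAt
  have hat : HasDerivAt (fun x => u (x, s)) (pdT u t s) t := (had t).hasDerivAt
  have hbt : HasDerivAt (fun x => ρ (x, s)) (pdT ρ t s) t := (hbd t).hasDerivAt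
  constructor
  · have hL : deriv (fun r => 1 / ρ (r, s)) t = _ := ((hasDerivAt_const t (1:ℝ)).div hbt hρne).deriv
    have hR : deriv (fun w => -2 * ρ (t, w) * deriv (fun w' => u (t, w')) w / u (t, w)) s = _ :=
      ((((hasDerivAt_const s (-2:ℝ)).mul hrs).mul hg2).div hgs hune).deriv
    simp only [Pi.mul_apply] at hR
    rw [hL]
    rw [show (fun w => -2 * ρ (t, w) * pdS u t w / u (t, w))
        = (fun w => -2 * ρ (t, w) * deriv (fun w' => u (t, w')) w / u (t, w)) from rfl]
    rw [hR, heqρ t s]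
    have h1 : deriv (fun w => u (t, w)) s = pdS u t s := rfl
    rw [h1]
    field_simp
    ring
  · have hL : deriv (fun r => u (r, s) / ρ (r, s)) t = _ := (hat.div hbt hρne).deriv
    have hR : deriv (fun w => -(ρ (t, w) * deriv (fun w' => u (t, w')) w)) s = _ :=
      ((hrs.mul hg2).neg).deriv
    rw [hL]
    rw [show (fun w => -(ρ (t, w) * pdS u t w))
        = (fun w => -(ρ (t, w) * deriv (fun w' => u (t, w')) w)) from rfl]
    rw [hR, hequ t s, heqρ t s]
    have h1 : deriv (fun w => u (t, w)) s = pdS u t s := rfl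
    rw [h1]
    field_simp
    ring
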